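/- For every Borel set B ⊆ E ∖ {0}, ∫_0^∞ M_σ(e^{s}B) ds = M_{σ₂}(B) (equality in [0,∞]), where e^{s}B := {e^{s}x : x ∈ B} and σ₂ is the Borel measure on S × (0,2) given by dσ₂(u,z) = z^{−1} dσ(u,z). -/

import Mathlib

open MeasureTheory Real ENNReal

/-- The measure `M_σ` on `E ∖ {0}` associated with a finite Borel measure `σ` on
`S × (0,2)` (modelled as a measure on `E × ℝ` concentrated on the unit sphere times `(0,2)`):
`M_σ(B) = ∫_{S×(0,2)} (∫_0^∞ 1_B(w·u) w^{-(z+1)} dw) σ(d(u,z))`. -/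
noncomputable def Msig {E : Type*} [NormedAddCommGroup E] [NormedSpace ℝ E]
    [MeasurableSpace E] [BorelSpace E] (σ : Measure (E × ℝ)) : Measure E :=
  σ.bind (fun p => Measure.map (fun w : ℝ => w • p.1)
    ((MeasureTheory.volume.restrict (Set.Ioi (0:ℝ))).withDensity
        (fun w => ENNReal.ofReal (w ^ (-(p.2 + 1))))))

section Aux

variable {E : Type*} [NormedAddCommGroup E] [NormedSpace ℝ E]
    [MeasurableSpace E] [BorelSpace E]

/-- Integral of the kernel against a set. -/
lemma msig_kernel_apply (p : E × ℝ) {B : Set E} (hB : MeasurableSet B) :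
    (Measure.map (fun w : ℝ => w • p.1)
      ((MeasureTheory.volume.restrict (Set.Ioi (0:ℝ))).withDensity
          (fun w => ENNReal.ofReal (w ^ (-(p.2 + 1)))))) B
      = ∫⁻ w in Set.Ioi (0:ℝ),
          B.indicator (fun _ => (1:ℝ≥0∞)) (w • p.1) * ENNReal.ofReal (w ^ (-(p.2 + 1))) := by
  have hf : Measurable fun w : ℝ => w • p.1 :=
    (continuous_id.smul continuous_const).measurable
  rw [Measure.map_apply hf hB, withDensity_apply _ (hf hB),
    Measure.restrict_restrict (hf hB),
    ← lintegral_indicator ((hf hB).inter measurableSet_Ioi),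
    ← lintegral_indicator measurableSet_Ioi]
  refine lintegral_congr fun w => ?_
  by_cases hw : w ∈ Set.Ioi (0:ℝ)
  · by_cases hwB : w • p.1 ∈ B <;>
      simp [Set.indicator_apply, hw, hwB, Set.mem_inter_iff]
  · simp [Set.indicator_apply, hw, Set.mem_inter_iff]

variable [SecondCountableTopology E]

lemma msig_meas_aux {B : Set E} (hB : MeasurableSet B) :
    Measurable fun p : E × ℝ => ∫⁻ w in Set.Ioi (0:ℝ),
      B.indicator (fun _ => (1:ℝ≥0∞)) (w • p.1) * ENNReal.ofReal (w ^ (-(p.2 + 1))) := by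
  apply Measurable.lintegral_prod_right (f := fun (p : E × ℝ) (w : ℝ) =>
    B.indicator (fun _ => (1:ℝ≥0∞)) (w • p.1) * ENNReal.ofReal (w ^ (-(p.2 + 1))))
  have h1 : Measurable fun q : (E × ℝ) × ℝ => q.2 • q.1.1 :=
    (continuous_snd.smul (continuous_fst.fst)).measurable
  exact ((measurable_one.indicator hB).comp h1).mul
    ((measurable_snd.pow ((measurable_fst.snd.add_const 1).neg)).ennreal_ofReal)

lemma Msig_apply (σ : Measure (E × ℝ)) {B : Set E} (hB : MeasurableSet B) :
    Msig σ B = ∫⁻ p, (∫⁻ w in Set.Ioi (0:ℝ),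
      B.indicator (fun _ => (1:ℝ≥0∞)) (w • p.1) * ENNReal.ofReal (w ^ (-(p.2 + 1)))) ∂σ := by
  rw [Msig, Measure.bind_apply hB]
  · exact lintegral_congr fun p => msig_kernel_apply p hB
  · refine (Measure.measurable_of_measurable_coe _ fun s hs => ?_).aemeasurable
    simp_rw [msig_kernel_apply _ hs]
    exact msig_meas_aux hs

/-- Change of variables `w ↦ c * w` for lower integrals on `(0, ∞)`. -/
lemma lintegral_Ioi_comp_mul_left {g : ℝ → ℝ≥0∞} (hg : Measurable g) {c : ℝ} (hc : 0 < c) :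
    ∫⁻ w in Set.Ioi (0:ℝ), g (c * w) = ENNReal.ofReal c⁻¹ * ∫⁻ v in Set.Ioi (0:ℝ), g v := by
  have key : ∀ w : ℝ, (Set.Ioi (0:ℝ)).indicator g (c * w)
      = (Set.Ioi (0:ℝ)).indicator (fun w => g (c * w)) w := by
    intro w
    by_cases hw : w ∈ Set.Ioi (0:ℝ)
    · have : c * w ∈ Set.Ioi (0:ℝ) := mul_pos hc hw
      simp [Set.indicator_apply, hw, this]
    · have : c * w ∉ Set.Ioi (0:ℝ) := by
        simp only [Set.mem_Ioi, not_lt] at hw ⊢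
        exact mul_nonpos_of_nonneg_of_nonpos hc.le hw
      simp [Set.indicator_apply, hw, this]
  calc ∫⁻ w in Set.Ioi (0:ℝ), g (c * w)
      = ∫⁻ w, (Set.Ioi (0:ℝ)).indicator (fun w => g (c * w)) w :=
        (lintegral_indicator measurableSet_Ioi _).symm
    _ = ∫⁻ w, (Set.Ioi (0:ℝ)).indicator g (c * w) := by
        exact lintegral_congr fun w => (key w).symm
    _ = ∫⁻ x, (Set.Ioi (0:ℝ)).indicator g x ∂(Measure.map (c * ·) volume) := by
        rw [lintegral_map (hg.indicator measurableSet_Ioi) (measurable_const_mul c)]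
    _ = ENNReal.ofReal c⁻¹ * ∫⁻ v in Set.Ioi (0:ℝ), g v := by
        rw [Real.map_volume_mul_left hc.ne', lintegral_smul_measure,
          lintegral_indicator measurableSet_Ioi, abs_of_pos (inv_pos.mpr hc), smul_eq_mul]

/-- Scaling identity for the inner integral. -/
lemma J_scale (u : E) (z : ℝ) {B : Set E} (hB : MeasurableSet B) {c : ℝ} (hc : 0 < c) :
    ∫⁻ w in Set.Ioi (0:ℝ),
        B.indicator (fun _ => (1:ℝ≥0∞)) ((c * w) • u) * ENNReal.ofReal (w ^ (-(z + 1)))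
      = ENNReal.ofReal (c ^ z) * ∫⁻ w in Set.Ioi (0:ℝ),
          B.indicator (fun _ => (1:ℝ≥0∞)) (w • u) * ENNReal.ofReal (w ^ (-(z + 1))) := by
  set g : ℝ → ℝ≥0∞ := fun v =>
    B.indicator (fun _ => (1:ℝ≥0∞)) (v • u) * ENNReal.ofReal (v ^ (-(z + 1))) with hg_def
  have hgm : Measurable g := by
    have h1 : Measurable fun v : ℝ => v • u :=
      (continuous_id.smul continuous_const).measurable
    exact ((measurable_one.indicator hB).comp h1).mul
      ((measurable_id.pow measurable_const).ennreal_ofReal)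
  have step1 : ∫⁻ w in Set.Ioi (0:ℝ),
      B.indicator (fun _ => (1:ℝ≥0∞)) ((c * w) • u) * ENNReal.ofReal (w ^ (-(z + 1)))
      = ∫⁻ w in Set.Ioi (0:ℝ), ENNReal.ofReal (c ^ (z + 1)) * g (c * w) := by
    refine setLIntegral_congr_fun measurableSet_Ioi (fun w hw => ?_)
    have hw0 : (0:ℝ) < w := hw
    have hmul : (c * w) ^ (-(z + 1)) = c ^ (-(z + 1)) * w ^ (-(z + 1)) :=
      Real.mul_rpow hc.le hw0.le
    have hcc : ENNReal.ofReal (c ^ (z + 1)) * ENNReal.ofReal (c ^ (-(z + 1))) = 1 := by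
      rw [← ENNReal.ofReal_mul (Real.rpow_nonneg hc.le _), ← Real.rpow_add hc,
        show z + 1 + -(z + 1) = 0 by ring, Real.rpow_zero, ENNReal.ofReal_one]
    simp only [hg_def, hmul, ENNReal.ofReal_mul (Real.rpow_nonneg hc.le _)]
    calc B.indicator (fun _ => (1:ℝ≥0∞)) ((c * w) • u) * ENNReal.ofReal (w ^ (-(z + 1)))
        = (ENNReal.ofReal (c ^ (z + 1)) * ENNReal.ofReal (c ^ (-(z + 1)))) *
            (B.indicator (fun _ => (1:ℝ≥0∞)) ((c * w) • u) * ENNReal.ofReal (w ^ (-(z + 1)))) := by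
          rw [hcc, one_mul]
      _ = ENNReal.ofReal (c ^ (z + 1)) *
            (B.indicator (fun _ => (1:ℝ≥0∞)) ((c * w) • u) *
              (ENNReal.ofReal (c ^ (-(z + 1))) * ENNReal.ofReal (w ^ (-(z + 1))))) := by ring
  have hcomp : Measurable fun w : ℝ => g (c * w) := hgm.comp (measurable_const_mul c)
  rw [step1, lintegral_const_mul _ hcomp,
    lintegral_Ioi_comp_mul_left hgm hc, ← mul_assoc,
    ← ENNReal.ofReal_mul (Real.rpow_nonneg hc.le _)]
  congr 2
  rw [Real.rpow_add hc z 1, Real.rpow_one, mul_assoc, mul_inv_cancel₀ hc.ne', mul_one]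

lemma lintegral_exp_rpow {z : ℝ} (hz : 0 < z) :
    ∫⁻ s in Set.Ioi (0:ℝ), ENNReal.ofReal (Real.exp (-s) ^ z) = ENNReal.ofReal z⁻¹ := by
  have h1 : ∀ s : ℝ, Real.exp (-s) ^ z = Real.exp (-z * s) := by
    intro s
    rw [Real.rpow_def_of_pos (Real.exp_pos _), Real.log_exp]
    congr 1
    ring
  simp_rw [h1]
  have hint : IntegrableOn (fun s : ℝ => Real.exp (-z * s)) (Set.Ioi 0) :=
    exp_neg_integrableOn_Ioi 0 hz
  rw [← ofReal_integral_eq_lintegral_ofReal hint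
    (Filter.Eventually.of_forall fun s => (Real.exp_pos _).le)]
  congr 1
  have := integral_comp_mul_left_Ioi (fun x => Real.exp (-x)) 0 hz
  simp only [mul_zero, integral_exp_neg_Ioi, neg_zero, Real.exp_zero, smul_eq_mul, mul_one] at this
  calc ∫ s in Set.Ioi (0:ℝ), Real.exp (-z * s)
      = ∫ s in Set.Ioi (0:ℝ), Real.exp (-(z * s)) := by
        refine setIntegral_congr_fun measurableSet_Ioi fun s _ => ?_
        ring_nf
    _ = z⁻¹ := this

end Aux

/-- For every Borel set `B ⊆ E ∖ {0}`,
`∫_0^∞ M_σ(e^s B) ds = M_{σ₂}(B)` in `[0,∞]`, where `e^s B = {e^s x : x ∈ B}` and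
`dσ₂(u,z) = z⁻¹ dσ(u,z)`. -/
theorem Msig_invariant_selfdec_transform
    {E : Type*} [NormedAddCommGroup E] [NormedSpace ℝ E] [CompleteSpace E]
    [MeasurableSpace E] [BorelSpace E] [SecondCountableTopology E]
    (σ : Measure (E × ℝ)) [IsFiniteMeasure σ]
    (hσ : σ {p : E × ℝ | ‖p.1‖ = 1 ∧ p.2 ∈ Set.Ioo (0:ℝ) 2}ᶜ = 0)
    (B : Set E) (hB : MeasurableSet B) (hB0 : B ⊆ {(0:E)}ᶜ) :
    ∫⁻ s in Set.Ioi (0:ℝ), Msig σ ((fun x => Real.exp (-s) • x) ⁻¹' B)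
      = Msig (σ.withDensity (fun p => ENNReal.ofReal (p.2)⁻¹)) B := by
  classical
  set J : E × ℝ → ℝ≥0∞ := fun p => ∫⁻ w in Set.Ioi (0:ℝ),
    B.indicator (fun _ => (1:ℝ≥0∞)) (w • p.1) * ENNReal.ofReal (w ^ (-(p.2 + 1))) with hJ
  have hJm : Measurable J := msig_meas_aux hB
  have hae : ∀ᵐ p ∂σ, ‖p.1‖ = 1 ∧ p.2 ∈ Set.Ioo (0:ℝ) 2 := by
    rw [MeasureTheory.ae_iff]
    convert hσ using 2
    rfl
  -- Step 1: rewrite the left side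
  have step1 : ∀ s : ℝ, Msig σ ((fun x => Real.exp (-s) • x) ⁻¹' B)
      = ∫⁻ p, ENNReal.ofReal (Real.exp (-s) ^ p.2) * J p ∂σ := by
    intro s
    have hmeas : MeasurableSet ((fun x => Real.exp (-s) • x) ⁻¹' B) :=
      hB.preimage (continuous_const_smul _).measurable
    rw [Msig_apply σ hmeas]
    refine lintegral_congr fun p => ?_
    have hind : ∀ w : ℝ,
        ((fun x => Real.exp (-s) • x) ⁻¹' B).indicator (fun _ => (1:ℝ≥0∞)) (w • p.1)
          = B.indicator (fun _ => (1:ℝ≥0∞)) ((Real.exp (-s) * w) • p.1) := by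
      intro w
      simp only [Set.indicator_apply, Set.mem_preimage, smul_smul]
    simp_rw [hind]
    exact J_scale p.1 p.2 hB (Real.exp_pos _)
  simp_rw [step1]
  -- Step 2: swap the integrals (Tonelli)
  have hswap : ∫⁻ s in Set.Ioi (0:ℝ), (∫⁻ p, ENNReal.ofReal (Real.exp (-s) ^ p.2) * J p ∂σ)
      = ∫⁻ p, (∫⁻ s in Set.Ioi (0:ℝ), ENNReal.ofReal (Real.exp (-s) ^ p.2) * J p) ∂σ := by
    refine lintegral_lintegral_swap ?_
    refine Measurable.aemeasurable ?_
    exact ((((measurable_fst.neg.exp).pow measurable_snd.snd).ennreal_ofReal).mul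
      (hJm.comp measurable_snd))
  rw [hswap]
  -- Step 3: compute the inner integral over s, a.e. in p
  have step3 : ∫⁻ p, (∫⁻ s in Set.Ioi (0:ℝ), ENNReal.ofReal (Real.exp (-s) ^ p.2) * J p) ∂σ
      = ∫⁻ p, ENNReal.ofReal (p.2)⁻¹ * J p ∂σ := by
    refine lintegral_congr_ae (hae.mono fun p hp => ?_)
    have hz : 0 < p.2 := hp.2.1
    have hm : Measurable fun s : ℝ => ENNReal.ofReal (Real.exp (-s) ^ p.2) :=
      (measurable_neg.exp.pow measurable_const).ennreal_ofReal
    simp only []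
    rw [lintegral_mul_const _ hm, lintegral_exp_rpow hz]
  rw [step3]
  -- Step 4: rewrite the right side
  rw [Msig_apply _ hB,
    lintegral_withDensity_eq_lintegral_mul σ (f := fun p : E × ℝ => ENNReal.ofReal (p.2)⁻¹) (measurable_snd.inv.ennreal_ofReal) hJm]
  rfl
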